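/- For a positive smooth function ρ, the Bohm potential term satisfies the conservative form identity ρ·((√ρ)''/√ρ)' = (1/2)·(ρ·(ln ρ)'')'. -/

import Mathlib

set_option maxHeartbeats 1000000 in
theorem stmt_7 (ρ : ℝ → ℝ) (hρ : ContDiff ℝ 3 ρ) (hpos : ∀ x, 0 < ρ x) :
    ∀ x : ℝ,
      ρ x * deriv (fun y => deriv (deriv (fun z => Real.sqrt (ρ z))) y
              / Real.sqrt (ρ y)) x
        = (1 / 2) * deriv (fun y =>
            ρ y * deriv (deriv (fun z => Real.log (ρ z))) y) x := by
  have hd1 : Differentiable ℝ ρ := hρ.differentiable (by norm_num)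
  have hρ2 : ContDiff ℝ 2 (deriv ρ) :=
    ((contDiff_succ_iff_deriv (n := 2)).mp (hρ.of_le (by norm_num))).2.2
  have hd2 : Differentiable ℝ (deriv ρ) := hρ2.differentiable (by norm_num)
  have hρ1 : ContDiff ℝ 1 (deriv (deriv ρ)) :=
    ((contDiff_succ_iff_deriv (n := 1)).mp hρ2).2.2
  have hd3 : Differentiable ℝ (deriv (deriv ρ)) := hρ1.differentiable one_ne_zero
  set f1 := deriv ρ with hf1
  set f2 := deriv f1 with hf2
  set f3 := deriv f2 with hf3
  have h1 : ∀ x, HasDerivAt ρ (f1 x) x := fun x => (hd1 x).hasDerivAt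
  have h2 : ∀ x, HasDerivAt f1 (f2 x) x := fun x => (hd2 x).hasDerivAt
  have h3 : ∀ x, HasDerivAt f2 (f3 x) x := fun x => (hd3 x).hasDerivAt
  have hne : ∀ x, ρ x ≠ 0 := fun x => (hpos x).ne'
  have hs : ∀ x, 0 < Real.sqrt (ρ x) := fun x => Real.sqrt_pos.mpr (hpos x)
  have hsne : ∀ x, Real.sqrt (ρ x) ≠ 0 := fun x => (hs x).ne'
  -- first derivative of sqrt ∘ ρ
  have hA : ∀ x, HasDerivAt (fun z => Real.sqrt (ρ z))
      (f1 x / (2 * Real.sqrt (ρ x))) x := fun x => (h1 x).sqrt (hne x)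
  have hAd : deriv (fun z => Real.sqrt (ρ z)) = fun x => f1 x / (2 * Real.sqrt (ρ x)) :=
    funext fun x => (hA x).deriv
  -- second derivative of sqrt ∘ ρ
  have hB : ∀ x, HasDerivAt (fun y => f1 y / (2 * Real.sqrt (ρ y)))
      (f2 x / (2 * Real.sqrt (ρ x))
        - f1 x ^ 2 / (4 * ρ x * Real.sqrt (ρ x))) x := by
    intro x
    have hD := (h2 x).div ((hA x).const_mul 2) (mul_ne_zero two_ne_zero (hsne x))
    refine (hD : HasDerivAt (fun y => f1 y / (2 * Real.sqrt (ρ y))) _ x).congr_deriv ?_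
    have hq : ρ x = Real.sqrt (ρ x) ^ 2 := (Real.sq_sqrt (hpos x).le).symm
    set s := Real.sqrt (ρ x) with hsdef
    have hs0 : s ≠ 0 := hsne x
    rw [hq]
    field_simp
    ring
  have hBd : deriv (deriv (fun z => Real.sqrt (ρ z))) =
      fun x => f2 x / (2 * Real.sqrt (ρ x))
        - f1 x ^ 2 / (4 * ρ x * Real.sqrt (ρ x)) := by
    rw [hAd]; exact funext fun x => (hB x).deriv
  -- derivative of log ∘ ρ
  have hL : ∀ x, HasDerivAt (fun z => Real.log (ρ z)) (f1 x / ρ x) x :=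
    fun x => (h1 x).log (hne x)
  have hLd : deriv (fun z => Real.log (ρ z)) = fun x => f1 x / ρ x :=
    funext fun x => (hL x).deriv
  have hL2 : ∀ x, HasDerivAt (fun y => f1 y / ρ y)
      ((f2 x * ρ x - f1 x * f1 x) / ρ x ^ 2) x :=
    fun x => (h2 x).div (h1 x) (hne x)
  have hLd2 : deriv (deriv (fun z => Real.log (ρ z))) =
      fun x => (f2 x * ρ x - f1 x * f1 x) / ρ x ^ 2 := by
    rw [hLd]; exact funext fun x => (hL2 x).deriv
  intro x
  -- LHS derivative
  have hS2 : HasDerivAt (fun y => f2 y / (2 * Real.sqrt (ρ y))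
      - f1 y ^ 2 / (4 * ρ y * Real.sqrt (ρ y)))
      (((f3 x * (2 * Real.sqrt (ρ x)) - f2 x * (2 * (f1 x / (2 * Real.sqrt (ρ x)))))
          / (2 * Real.sqrt (ρ x)) ^ 2)
        - ((2 * f1 x ^ 1 * f2 x * (4 * ρ x * Real.sqrt (ρ x))
            - f1 x ^ 2 * (4 * f1 x * Real.sqrt (ρ x)
              + 4 * ρ x * (f1 x / (2 * Real.sqrt (ρ x)))))
          / (4 * ρ x * Real.sqrt (ρ x)) ^ 2)) x :=
    ((h3 x).div ((hA x).const_mul 2) (mul_ne_zero two_ne_zero (hsne x))).sub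
      (((h2 x).pow 2).div (((h1 x).const_mul 4).mul (hA x))
        (by exact (mul_pos (mul_pos (by norm_num) (hpos x)) (hs x)).ne'))
  have hC : HasDerivAt (fun y => (f2 y / (2 * Real.sqrt (ρ y))
        - f1 y ^ 2 / (4 * ρ y * Real.sqrt (ρ y))) / Real.sqrt (ρ y)) _ x :=
    hS2.div (hA x) (hsne x)
  have hR : HasDerivAt (fun y => ρ y * ((f2 y * ρ y - f1 y * f1 y) / ρ y ^ 2))
      (f1 x * ((f2 x * ρ x - f1 x * f1 x) / ρ x ^ 2)
        + ρ x * (((f3 x * ρ x + f2 x * f1 x - (f2 x * f1 x + f1 x * f2 x)) * ρ x ^ 2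
            - (f2 x * ρ x - f1 x * f1 x) * (2 * ρ x ^ 1 * f1 x)) / (ρ x ^ 2) ^ 2)) x :=
    (h1 x).mul ((((h3 x).mul (h1 x)).sub ((h2 x).mul (h2 x))).div
      ((h1 x).pow 2) (pow_ne_zero 2 (hne x)))
  have e1 : (fun y => deriv (deriv (fun z => Real.sqrt (ρ z))) y / Real.sqrt (ρ y))
      = fun y => (f2 y / (2 * Real.sqrt (ρ y))
        - f1 y ^ 2 / (4 * ρ y * Real.sqrt (ρ y))) / Real.sqrt (ρ y) := by
    funext y; rw [hBd]
  have e2 : (fun y => ρ y * deriv (deriv (fun z => Real.log (ρ z))) y)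
      = fun y => ρ y * ((f2 y * ρ y - f1 y * f1 y) / ρ y ^ 2) := by
    funext y; rw [hLd2]
  rw [e1, e2, hC.deriv, hR.deriv]
  have hq : ρ x = Real.sqrt (ρ x) ^ 2 := (Real.sq_sqrt (hpos x).le).symm
  set s := Real.sqrt (ρ x) with hsdef
  have hs0 : s ≠ 0 := hsne x
  rw [hq]
  field_simp
  ring
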